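/- Let x₁, x₂, x₃, x₄ ∈ ℝ³ with every three of them linearly independent, and suppose there are nonnegative weights w₁,…,w₄, not all zero, with ∑ᵢ wᵢxᵢ = 0. Then for any choice of distinct indices i, j and the remaining indices k, l, one has det(xᵢ,xⱼ,x_k) · det(xᵢ,xⱼ,x_l) < 0. -/

import Mathlib

noncomputable def det3 (a b c : Fin 3 → ℝ) : ℝ := Matrix.det (Matrix.transpose (Matrix.of ![a, b, c]))

lemma det3_expand (a b c : Fin 3 → ℝ) :
    det3 a b c = a 0 * (b 1 * c 2) - a 0 * (b 2 * c 1) - a 1 * (b 0 * c 2)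
      + a 1 * (b 2 * c 0) + a 2 * (b 0 * c 1) - a 2 * (b 1 * c 0) := by
  rw [det3, Matrix.det_transpose, Matrix.det_fin_three]; simp [Matrix.of_apply]; ring

lemma det3_ne_zero {a b c : Fin 3 → ℝ} (h : LinearIndependent ℝ ![a, b, c]) :
    det3 a b c ≠ 0 := by
  have h' : LinearIndependent ℝ (Matrix.of ![a, b, c]).row := h
  rw [Matrix.linearIndependent_rows_iff_isUnit, Matrix.isUnit_iff_isUnit_det,
    isUnit_iff_ne_zero] at h'
  rw [det3, Matrix.det_transpose]; exact h'

lemma fin4_cover (a b c d m : Fin 4) (hab : a ≠ b) (hac : a ≠ c) (had : a ≠ d)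
    (hbc : b ≠ c) (hbd : b ≠ d) (hcd : c ≠ d) : m = a ∨ m = b ∨ m = c ∨ m = d := by
  have h1 : a.val ≠ b.val := fun h => hab (Fin.ext h)
  have h2 : a.val ≠ c.val := fun h => hac (Fin.ext h)
  have h3 : a.val ≠ d.val := fun h => had (Fin.ext h)
  have h4 : b.val ≠ c.val := fun h => hbc (Fin.ext h)
  have h5 : b.val ≠ d.val := fun h => hbd (Fin.ext h)
  have h6 : c.val ≠ d.val := fun h => hcd (Fin.ext h)
  have := a.isLt; have := b.isLt; have := c.isLt; have := d.isLt; have := m.isLt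
  have : m.val = a.val ∨ m.val = b.val ∨ m.val = c.val ∨ m.val = d.val := by omega
  rcases this with h | h | h | h
  exacts [Or.inl (Fin.ext h), Or.inr (Or.inl (Fin.ext h)),
    Or.inr (Or.inr (Or.inl (Fin.ext h))), Or.inr (Or.inr (Or.inr (Fin.ext h)))]

theorem weights_imply_separation (x : Fin 4 → (Fin 3 → ℝ))
    (hindep : ∀ i j k : Fin 4, i ≠ j → i ≠ k → j ≠ k →
      LinearIndependent ℝ ![x i, x j, x k])
    (w : Fin 4 → ℝ) (hw : ∀ i, 0 ≤ w i) (hw0 : ∃ i, w i ≠ 0)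
    (hsum : ∑ i, w i • x i = 0) :
    ∀ i j k l : Fin 4, i ≠ j → i ≠ k → i ≠ l → j ≠ k → j ≠ l → k ≠ l →
      det3 (x i) (x j) (x k) * det3 (x i) (x j) (x l) < 0 := by
  have key : ∀ a b c d : Fin 4, a ≠ b → a ≠ c → a ≠ d → b ≠ c → b ≠ d → c ≠ d →
      w a • x a + w b • x b + w c • x c + w d • x d = 0 → w d = 0 → False := by
    intro a b c d hab hac had hbc hbd hcd hs hd0
    have hlin := (Fintype.linearIndependent_iff.1 (hindep a b c hab hac hbc)) ![w a, w b, w c]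
    have h0 : ∑ m : Fin 3, (![w a, w b, w c]) m • (![x a, x b, x c]) m = 0 := by
      simp only [Fin.sum_univ_three, Matrix.cons_val_zero, Matrix.cons_val_one,
        Matrix.head_cons, Matrix.cons_val_two, Matrix.tail_cons]
      rw [hd0] at hs
      linear_combination (norm := module) hs
    have hz : ∀ m : Fin 4, w m = 0 := by
      intro m
      rcases fin4_cover a b c d m hab hac had hbc hbd hcd with h | h | h | h <;> subst h
      exacts [hlin h0 0, hlin h0 1, hlin h0 2, hd0]
    obtain ⟨m, hm⟩ := hw0
    exact hm (hz m)
  intro i j k l hij hik hil hjk hjl hkl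
  have huniv : ({i, j, k, l} : Finset (Fin 4)) = Finset.univ := by
    apply Finset.eq_univ_iff_forall.2
    intro m
    rcases fin4_cover i j k l m hij hik hil hjk hjl hkl with h | h | h | h <;> simp [h]
  have hsum4 : w i • x i + w j • x j + w k • x k + w l • x l = 0 := by
    rw [← huniv] at hsum
    rw [show ({i, j, k, l} : Finset (Fin 4)) =
        insert i (insert j (insert k ({l} : Finset (Fin 4)))) from rfl] at hsum
    rw [Finset.sum_insert (by simp [hij, hik, hil]),
      Finset.sum_insert (by simp [hjk, hjl]),
      Finset.sum_insert (by simp [hkl]), Finset.sum_singleton] at hsum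
    linear_combination (norm := module) hsum
  have hwl : 0 < w l := by
    rcases lt_or_eq_of_le (hw l) with h | h
    · exact h
    · exact absurd (key i j k l hij hik hil hjk hjl hkl hsum4 h.symm) (fun h => h)
  have hwk : 0 < w k := by
    rcases lt_or_eq_of_le (hw k) with h | h
    · exact h
    · have hs' : w i • x i + w j • x j + w l • x l + w k • x k = 0 := by
        linear_combination (norm := module) hsum4
      exact absurd (key i j l k hij hil hik hjl hjk hkl.symm hs' h.symm) (fun h => h)
  have e0 := congrFun hsum4 0
  have e1 := congrFun hsum4 1
  have e2 := congrFun hsum4 2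
  simp only [Pi.add_apply, Pi.smul_apply, Pi.zero_apply, smul_eq_mul] at e0 e1 e2
  set D := det3 (x i) (x j) (x k) with hD
  set E := det3 (x i) (x j) (x l) with hE
  have heq : w l * E + w k * D = 0 := by
    rw [hD, hE, det3_expand, det3_expand]
    linear_combination (x i 1 * x j 2 - x i 2 * x j 1) * e0 +
      (x i 2 * x j 0 - x i 0 * x j 2) * e1 + (x i 0 * x j 1 - x i 1 * x j 0) * e2
  have hDne : D ≠ 0 := det3_ne_zero (hindep i j k hij hik hjk)
  have hD2 : 0 < D * D := mul_self_pos.2 hDne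
  have h2 : w l * (D * E) = -(w k * (D * D)) := by linear_combination D * heq
  have h3 : w l * (D * E) < 0 := by rw [h2]; linarith [mul_pos hwk hD2]
  by_contra hcon
  push_neg at hcon
  exact absurd h3 (not_lt.2 (mul_nonneg hwl.le hcon))
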